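/- Suppose for both a ∈ {0,1}: m_n^(a) = ⟨λ_n, ρ_a⟩ + η_n^(a) with |η_n^(a)| ≤ Δ_E for all n; the weights β^(a) ∈ ℝ^{I^(a)} satisfy Σ_{n∈M^(1−a)} λ_n = Σ_{n∈I^(a)} β_n^(a) λ_n; and the observed outcomes are Y_n = m_n^(a) + ε_n^(a) for n ∈ I^(a), where ε_n^(a) ∈ ℝ. Let β̂^(a) ∈ ℝ^{I^(a)} be arbitrary vectors, set Δ_{β^(a)} = β̂^(a) − β^(a), and define the estimator ÂTE_M = (1/M)(Σ_{n∈M^(1)} Y_n + Σ_{n∈I^(1)} β̂_n^(1) Y_n) − (1/M)(Σ_{n∈M^(0)} Y_n + Σ_{n∈I^(0)} β̂_n^(0) Y_n) and the estimand ATE_M = (1/M) Σ_{n∈M} (m_n^(1) − m_n^(0)). Then |ÂTE_M − ATE_M| ≤ Δ_E (1 + (‖β^(0)‖_1 + ‖β^(1)‖_1)/M) + Σ_{a∈{0,1}} (1/M) | Σ_{n∈M^(a)} ε_n^(a) + ⟨β^(a), ε_{I^(a)}⟩ + ⟨Δ_{β^(a)}, ε_{I^(a)}⟩ + ⟨Δ_{β^(a)},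 m^(a)_{I^(a)}⟩ |, where ε_{I^(a)} = (ε_n^(a))_{n∈I^(a)} and m^(a)_{I^(a)} = (m_n^(a))_{n∈I^(a)}. -/
import Mathlib

open Finset

lemma key_id
    (N r : ℕ) (A : Fin N → Fin 2)
    (m η ε : Fin N → Fin 2 → ℝ) (Y : Fin N → ℝ)
    (lam : Fin N → Fin r → ℝ) (ρ : Fin 2 → Fin r → ℝ)
    (M : Finset (Fin N))
    (β βh : Fin 2 → Fin N → ℝ)
    (hm : ∀ n (a : Fin 2), m n a = (∑ i, lam n i * ρ a i) + η n a)
    (hY : ∀ n, Y n = m n (A n) + ε n (A n))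
    (a : Fin 2)
    (hspan : ∀ i, ∑ n ∈ M.filter (fun n => A n = 1 - a), lam n i
              = ∑ n ∈ univ.filter (fun n => A n = a), β a n * lam n i) :
    (∑ n ∈ M.filter (fun n => A n = a), Y n
        + ∑ n ∈ univ.filter (fun n => A n = a), βh a n * Y n)
      - ∑ n ∈ M, m n a
    = ((∑ n ∈ M.filter (fun n => A n = a), ε n a)
        + (∑ n ∈ univ.filter (fun n => A n = a), β a n * ε n a)
        + (∑ n ∈ univ.filter (fun n => A n = a), (βh a n - β a n) * ε n a)
        + (∑ n ∈ univ.filter (fun n => A n = a), (βh a n - β a n) * m n a))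
      + ((∑ n ∈ univ.filter (fun n => A n = a), β a n * η n a)
          - ∑ n ∈ M.filter (fun n => A n = 1 - a), η n a) := by
  have hiff : ∀ x b : Fin 2, ¬ x = b ↔ x = 1 - b := by decide
  -- split ∑_M m
  have hsplit : ∑ n ∈ M, m n a
      = ∑ n ∈ M.filter (fun n => A n = a), m n a
        + ∑ n ∈ M.filter (fun n => A n = 1 - a), m n a := by
    rw [← Finset.sum_filter_add_sum_filter_not M (fun n => A n = a)]
    congr 1
    apply Finset.sum_congr _ (fun _ _ => rfl)
    apply Finset.filter_congr
    intro n _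
    simp [hiff]
  -- Y on M^(a)
  have hYa : ∑ n ∈ M.filter (fun n => A n = a), Y n
      = ∑ n ∈ M.filter (fun n => A n = a), (m n a + ε n a) := by
    refine Finset.sum_congr rfl fun n hn => ?_
    simp only [Finset.mem_filter] at hn
    rw [hY, hn.2]
  have hYb : ∑ n ∈ univ.filter (fun n => A n = a), βh a n * Y n
      = ∑ n ∈ univ.filter (fun n => A n = a), βh a n * (m n a + ε n a) := by
    refine Finset.sum_congr rfl fun n hn => ?_
    simp only [Finset.mem_filter] at hn
    rw [hY, hn.2]
  -- key span fact
  have K : ∑ n ∈ univ.filter (fun n => A n = a), β a n * m n a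
      = (∑ n ∈ M.filter (fun n => A n = 1 - a), m n a)
        - (∑ n ∈ M.filter (fun n => A n = 1 - a), η n a)
        + ∑ n ∈ univ.filter (fun n => A n = a), β a n * η n a := by
    have h1 : ∑ n ∈ univ.filter (fun n => A n = a), β a n * m n a
        = ∑ n ∈ univ.filter (fun n => A n = a),
            (β a n * (∑ i, lam n i * ρ a i) + β a n * η n a) := by
      refine Finset.sum_congr rfl fun n _ => ?_
      rw [hm n a]; ring
    rw [h1, Finset.sum_add_distrib]
    have h2 : ∑ n ∈ univ.filter (fun n => A n = a), β a n * (∑ i, lam n i * ρ a i)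
        = ∑ n ∈ M.filter (fun n => A n = 1 - a), (∑ i, lam n i * ρ a i) := by
      calc ∑ n ∈ univ.filter (fun n => A n = a), β a n * (∑ i, lam n i * ρ a i)
          = ∑ n ∈ univ.filter (fun n => A n = a), ∑ i, (β a n * lam n i) * ρ a i := by
            refine Finset.sum_congr rfl fun n _ => ?_
            rw [Finset.mul_sum]; exact Finset.sum_congr rfl fun i _ => by ring
        _ = ∑ i, (∑ n ∈ univ.filter (fun n => A n = a), β a n * lam n i) * ρ a i := by
            rw [Finset.sum_comm]
            exact Finset.sum_congr rfl fun i _ => (Finset.sum_mul _ _ _).symm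
        _ = ∑ i, (∑ n ∈ M.filter (fun n => A n = 1 - a), lam n i) * ρ a i := by
            exact Finset.sum_congr rfl fun i _ => by rw [hspan i]
        _ = ∑ n ∈ M.filter (fun n => A n = 1 - a), (∑ i, lam n i * ρ a i) := by
            rw [Finset.sum_comm]
            exact Finset.sum_congr rfl fun n _ => by
              rw [Finset.sum_mul]
    have h3 : ∑ n ∈ M.filter (fun n => A n = 1 - a), (∑ i, lam n i * ρ a i)
        = ∑ n ∈ M.filter (fun n => A n = 1 - a), (m n a - η n a) := by
      refine Finset.sum_congr rfl fun n _ => ?_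
      rw [hm n a]; ring
    rw [h2, h3, Finset.sum_sub_distrib]
  -- finish
  rw [hYa, hYb, hsplit]
  simp only [mul_add, sub_mul, Finset.sum_add_distrib, Finset.sum_sub_distrib]
  linarith [K]

lemma bound_aux (Mc c0 c1 : ℕ) (ΔE B0 B1 e0 e1 r0 r1 : ℝ)
    (hMc : 0 < Mc) (hcard : c1 + c0 = Mc)
    (hr0 : |r0| ≤ ΔE * B0 + ΔE * c1)
    (hr1 : |r1| ≤ ΔE * B1 + ΔE * c0) :
    |((1:ℝ)/Mc) * ((e1 + r1) - (e0 + r0))|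
      ≤ ΔE * (1 + (B0 + B1)/Mc) + ((1:ℝ)/Mc * |e0| + (1:ℝ)/Mc * |e1|) := by
  have hMc' : (0:ℝ) < Mc := by exact_mod_cast hMc
  have hc : (0:ℝ) ≤ 1/Mc := by positivity
  rw [abs_mul, abs_of_nonneg hc]
  have hX : |(e1 + r1) - (e0 + r0)| ≤ (|e0| + |e1|) + (ΔE*B0 + ΔE*c1 + (ΔE*B1 + ΔE*c0)) := by
    calc |(e1 + r1) - (e0 + r0)| ≤ |e1 + r1| + |e0 + r0| := abs_sub _ _
      _ ≤ (|e1| + |r1|) + (|e0| + |r0|) := add_le_add (abs_add_le _ _) (abs_add_le _ _)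
      _ ≤ _ := by linarith
  have h2 : 1/(Mc:ℝ) * |(e1+r1)-(e0+r0)|
      ≤ 1/Mc * ((|e0|+|e1|) + (ΔE*B0 + ΔE*c1 + (ΔE*B1 + ΔE*c0))) :=
    mul_le_mul_of_nonneg_left hX hc
  have hsum : (c1:ℝ) + c0 = Mc := by exact_mod_cast hcard
  have hc0 : (c0:ℝ) = Mc - c1 := by linarith
  have h3 : 1/(Mc:ℝ) * ((|e0|+|e1|) + (ΔE*B0 + ΔE*c1 + (ΔE*B1 + ΔE*c0)))
      = ΔE * (1 + (B0+B1)/Mc) + (1/Mc * |e0| + 1/Mc * |e1|) := by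
    rw [hc0]; field_simp; ring
  linarith [h2, h3.symm.le]

/-- Proposition 4, deterministic error decomposition.
Units `n ∈ Fin N` with treatments `A n`; `I^(a) = {n | A n = a}`; `M ⊆ [N]` nonempty,
`M^(a) = M ∩ I^(a)`.  Mean potential outcomes `m n a = ⟨λ n, ρ a⟩ + η n a` with
`|η n a| ≤ Δ_E`; weights `β a` satisfy the linear span inclusion; observed outcomes
`Y n = m n (A n) + ε n (A n)`.  For arbitrary `β̂`, with `Δ_{β^(a)} = β̂ a - β a`,
the linear estimator
`ÂTE = (1/|M|)(∑_{M^(1)} Y + ∑_{I^(1)} β̂¹ Y) - (1/|M|)(∑_{M^(0)} Y + ∑_{I^(0)} β̂⁰ Y)`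
and estimand `ATE = (1/|M|) ∑_{M} (m n 1 - m n 0)` satisfy
`|ÂTE - ATE| ≤ Δ_E (1 + (‖β⁰‖₁+‖β¹‖₁)/|M|)
  + ∑_a (1/|M|) |∑_{M^(a)} ε n a + ⟨β a, ε⟩ + ⟨Δ_{β^(a)}, ε⟩ + ⟨Δ_{β^(a)}, m^(a)⟩|`. -/
theorem stmt3
    (N r : ℕ) (A : Fin N → Fin 2)
    (m η ε : Fin N → Fin 2 → ℝ) (Y : Fin N → ℝ)
    (lam : Fin N → Fin r → ℝ) (ρ : Fin 2 → Fin r → ℝ)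
    (M : Finset (Fin N)) (hM : M.Nonempty)
    (β βh : Fin 2 → Fin N → ℝ) (ΔE : ℝ)
    (hm : ∀ n (a : Fin 2), m n a = (∑ i, lam n i * ρ a i) + η n a)
    (hη : ∀ n (a : Fin 2), |η n a| ≤ ΔE)
    (hspan : ∀ (a : Fin 2) i, ∑ n ∈ M.filter (fun n => A n = 1 - a), lam n i
              = ∑ n ∈ univ.filter (fun n => A n = a), β a n * lam n i)
    (hY : ∀ n, Y n = m n (A n) + ε n (A n)) :
    |(((1 : ℝ) / M.card) * (∑ n ∈ M.filter (fun n => A n = 1), Y n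
          + ∑ n ∈ univ.filter (fun n => A n = 1), βh 1 n * Y n)
      - ((1 : ℝ) / M.card) * (∑ n ∈ M.filter (fun n => A n = 0), Y n
          + ∑ n ∈ univ.filter (fun n => A n = 0), βh 0 n * Y n))
      - ((1 : ℝ) / M.card) * (∑ n ∈ M, (m n 1 - m n 0))|
      ≤ ΔE * (1 + ((∑ n ∈ univ.filter (fun n => A n = 0), |β 0 n|)
                   + ∑ n ∈ univ.filter (fun n => A n = 1), |β 1 n|) / M.card)
        + ∑ a : Fin 2, ((1 : ℝ) / M.card) *
            |(∑ n ∈ M.filter (fun n => A n = a), ε n a)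
              + (∑ n ∈ univ.filter (fun n => A n = a), β a n * ε n a)
              + (∑ n ∈ univ.filter (fun n => A n = a), (βh a n - β a n) * ε n a)
              + (∑ n ∈ univ.filter (fun n => A n = a), (βh a n - β a n) * m n a)| := by
  have k1 := key_id N r A m η ε Y lam ρ M β βh hm hY 1 (hspan 1)
  have k0 := key_id N r A m η ε Y lam ρ M β βh hm hY 0 (hspan 0)
  simp only [(by decide : (1 - (1:Fin 2)) = 0), (by decide : (1 - (0:Fin 2)) = 1)] at k0 k1
  have hMc : 0 < M.card := Finset.card_pos.mpr hM
  -- |R a| bound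
  have habs : ∀ (a b : Fin 2),
      |(∑ n ∈ univ.filter (fun n => A n = a), β a n * η n a)
        - ∑ n ∈ M.filter (fun n => A n = b), η n a|
      ≤ ΔE * (∑ n ∈ univ.filter (fun n => A n = a), |β a n|)
        + ΔE * (M.filter (fun n => A n = b)).card := by
    intro a b
    have h1 : |∑ n ∈ univ.filter (fun n => A n = a), β a n * η n a|
        ≤ ΔE * (∑ n ∈ univ.filter (fun n => A n = a), |β a n|) := by
      calc |∑ n ∈ univ.filter (fun n => A n = a), β a n * η n a|
          ≤ ∑ n ∈ univ.filter (fun n => A n = a), |β a n * η n a| :=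
            Finset.abs_sum_le_sum_abs _ _
        _ ≤ ∑ n ∈ univ.filter (fun n => A n = a), |β a n| * ΔE :=
            Finset.sum_le_sum fun n _ => by
              rw [abs_mul]
              exact mul_le_mul_of_nonneg_left (hη n a) (abs_nonneg _)
        _ = ΔE * ∑ n ∈ univ.filter (fun n => A n = a), |β a n| := by
            rw [← Finset.sum_mul]; ring
    have h2 : |∑ n ∈ M.filter (fun n => A n = b), η n a|
        ≤ ΔE * (M.filter (fun n => A n = b)).card := by
      calc |∑ n ∈ M.filter (fun n => A n = b), η n a|
          ≤ ∑ n ∈ M.filter (fun n => A n = b), |η n a| := Finset.abs_sum_le_sum_abs _ _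
        _ ≤ ∑ _n ∈ M.filter (fun n => A n = b), ΔE := Finset.sum_le_sum fun n _ => hη n a
        _ = ΔE * (M.filter (fun n => A n = b)).card := by
            rw [Finset.sum_const, nsmul_eq_mul]; ring
    calc |(∑ n ∈ univ.filter (fun n => A n = a), β a n * η n a)
            - ∑ n ∈ M.filter (fun n => A n = b), η n a|
        ≤ |∑ n ∈ univ.filter (fun n => A n = a), β a n * η n a|
          + |∑ n ∈ M.filter (fun n => A n = b), η n a| := abs_sub _ _
      _ ≤ _ := add_le_add h1 h2
  have hcard : (M.filter (fun n => A n = 1)).card + (M.filter (fun n => A n = 0)).card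
      = M.card := by
    have hneg : M.filter (fun n => ¬ A n = 1) = M.filter (fun n => A n = 0) := by
      apply Finset.filter_congr
      intro n _
      have h2 : ∀ x : Fin 2, ¬ x = 1 ↔ x = 0 := by decide
      simp [h2 (A n)]
    have h := Finset.card_filter_add_card_filter_not (s := M) (p := fun n => A n = 1)
    rw [hneg] at h
    exact h
  -- rewrite the inside of the abs
  have hval : (((1 : ℝ) / M.card) * (∑ n ∈ M.filter (fun n => A n = 1), Y n
          + ∑ n ∈ univ.filter (fun n => A n = 1), βh 1 n * Y n)
      - ((1 : ℝ) / M.card) * (∑ n ∈ M.filter (fun n => A n = 0), Y n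
          + ∑ n ∈ univ.filter (fun n => A n = 0), βh 0 n * Y n))
      - ((1 : ℝ) / M.card) * (∑ n ∈ M, (m n 1 - m n 0))
      = ((1:ℝ)/M.card) *
          ((((∑ n ∈ M.filter (fun n => A n = 1), Y n
              + ∑ n ∈ univ.filter (fun n => A n = 1), βh 1 n * Y n) - ∑ n ∈ M, m n 1))
           - (((∑ n ∈ M.filter (fun n => A n = 0), Y n
              + ∑ n ∈ univ.filter (fun n => A n = 0), βh 0 n * Y n) - ∑ n ∈ M, m n 0))) := by
    rw [Finset.sum_sub_distrib]; ring
  rw [hval, k1, k0, Fin.sum_univ_two]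
  exact bound_aux M.card (M.filter (fun n => A n = 0)).card (M.filter (fun n => A n = 1)).card
    ΔE _ _ _ _ _ _ hMc hcard (habs 0 1) (habs 1 0)
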